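/- arXiv:1504.03557 — 2 statements merged into one kernel-verified Lean document; each statement's English description precedes it below -/
import Mathlib

section
/- Let w_α(x) := A_α x1^{α1} x2^{α2} (1-x1-x2)^{α3} with A_α := Γ(|α|+3)/(Γ(α1+1)Γ(α2+1)Γ(α3+1)) and |α| := α1+α2+α3, where each αi > -1. Then for h, l ∈ Θ_m (with h3 := m-h1-h2, l3 := m-l1-l2), the weighted inner product ⟨B^m_h, B^m_l⟩_α := ∫_T w_α(x) B^m_h(x) B^m_l(x) dx equals C(m,h) C(m,l) (α1+1)_{h1+l1} (α2+1)_{h2+l2} (α3+1)_{h3+l3} / (|α|+3)_{2m}, where (a)_j denotes the shifted factorial (Pochhammer symbol) and C(m,k) the trinomial coefficient. -/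
open Finset

/-- Trinomial coefficient N!/(k1! k2! (N-k1-k2)!) as a real number. -/
noncomputable def trinom (N : ℕ) (k : ℕ × ℕ) : ℝ :=
  (N.factorial : ℝ) /
    ((k.1.factorial : ℝ) * (k.2.factorial : ℝ) * ((N - k.1 - k.2).factorial : ℝ))

/-- Bivariate Bernstein polynomial of degree n. -/
noncomputable def bern (n : ℕ) (k : ℕ × ℕ) (x : ℝ × ℝ) : ℝ :=
  trinom n k * x.1 ^ k.1 * x.2 ^ k.2 * (1 - x.1 - x.2) ^ (n - k.1 - k.2)

/-- The index set Θ_n = {k ∈ ℕ² : k1 + k2 ≤ n}. -/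
def Theta (n : ℕ) : Finset (ℕ × ℕ) :=
  (Finset.range (n + 1) ×ˢ Finset.range (n + 1)).filter (fun k => k.1 + k.2 ≤ n)


open MeasureTheory Real

/-- The standard triangle T ⊂ ℝ². -/
def stdTriangle : Set (ℝ × ℝ) :=
  {x : ℝ × ℝ | 0 ≤ x.1 ∧ 0 ≤ x.2 ∧ x.1 + x.2 ≤ 1}

/-- Shifted factorial (Pochhammer symbol) (a)_j. -/
noncomputable def poch (a : ℝ) (j : ℕ) : ℝ := (ascPochhammer ℝ j).eval a

/-- Normalizing constant A_α. -/
noncomputable def Aconst (α₁ α₂ α₃ : ℝ) : ℝ :=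
  Real.Gamma (α₁ + α₂ + α₃ + 3) /
    (Real.Gamma (α₁ + 1) * Real.Gamma (α₂ + 1) * Real.Gamma (α₃ + 1))

/-- The Jacobi-type weight w_α on the triangle. -/
noncomputable def walpha (α₁ α₂ α₃ : ℝ) (x : ℝ × ℝ) : ℝ :=
  Aconst α₁ α₂ α₃ * x.1 ^ α₁ * x.2 ^ α₂ * (1 - x.1 - x.2) ^ α₃


lemma betaR {a b : ℝ} (ha : -1 < a) (hb : -1 < b) :
    ∫ x in Set.Ioo (0:ℝ) 1, x ^ a * (1-x) ^ b =
      Real.Gamma (a+1) * Real.Gamma (b+1) / Real.Gamma (a+b+2) := by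
  have ha1 : (0:ℝ) < a + 1 := by linarith
  have hb1 : (0:ℝ) < b + 1 := by linarith
  have key := Complex.Gamma_mul_Gamma_eq_betaIntegral (s := ((a+1:ℝ):ℂ)) (t := ((b+1:ℝ):ℂ))
    (by simpa using ha1) (by simpa using hb1)
  have hbeta : Complex.betaIntegral ((a+1:ℝ):ℂ) ((b+1:ℝ):ℂ)
      = ((∫ x in (0:ℝ)..1, x ^ a * (1-x) ^ b : ℝ) : ℂ) := by
    rw [Complex.betaIntegral, ← intervalIntegral.integral_ofReal]
    apply intervalIntegral.integral_congr
    intro x hx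
    rw [Set.uIcc_of_le (by norm_num : (0:ℝ) ≤ 1)] at hx
    have h0 : (0:ℝ) ≤ x := hx.1
    have h1 : (0:ℝ) ≤ 1 - x := by linarith [hx.2]
    push_cast
    rw [Complex.ofReal_cpow h0, Complex.ofReal_cpow h1]
    norm_num
  rw [hbeta] at key
  have hsum : ((a+1:ℝ):ℂ) + ((b+1:ℝ):ℂ) = ((a+b+2:ℝ):ℂ) := by push_cast; ring
  rw [hsum, Complex.Gamma_ofReal, Complex.Gamma_ofReal, Complex.Gamma_ofReal] at key
  have key2 : Real.Gamma (a+1) * Real.Gamma (b+1)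
      = Real.Gamma (a+b+2) * ∫ x in (0:ℝ)..1, x ^ a * (1-x) ^ b := by
    exact_mod_cast key
  have hG : Real.Gamma (a+b+2) ≠ 0 := (Real.Gamma_pos_of_pos (by linarith)).ne'
  rw [intervalIntegral.integral_of_le (by norm_num : (0:ℝ) ≤ 1),
    integral_Ioc_eq_integral_Ioo] at key2
  field_simp
  linarith [key2]

def openTri : Set (ℝ × ℝ) := {x : ℝ × ℝ | 0 < x.1 ∧ 0 < x.2 ∧ x.1 + x.2 < 1}

lemma openTri_ae : stdTriangle =ᵐ[volume] openTri := by
  have h1 : volume {x : ℝ × ℝ | x.1 = 0} = 0 := by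
    have : {x : ℝ × ℝ | x.1 = 0} = ({0} : Set ℝ) ×ˢ (Set.univ : Set ℝ) := by
      ext x
      simp only [Set.mem_setOf_eq, Set.mem_prod, Set.mem_singleton_iff, Set.mem_univ, and_true]
    rw [this, Measure.volume_eq_prod, Measure.prod_prod]
    simp
  have h2 : volume {x : ℝ × ℝ | x.2 = 0} = 0 := by
    have : {x : ℝ × ℝ | x.2 = 0} = (Set.univ : Set ℝ) ×ˢ ({0} : Set ℝ) := by
      ext x
      simp only [Set.mem_setOf_eq, Set.mem_prod, Set.mem_singleton_iff, Set.mem_univ, true_and]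
    rw [this, Measure.volume_eq_prod, Measure.prod_prod]
    simp
  have h3 : volume {x : ℝ × ℝ | x.1 + x.2 = 1} = 0 := by
    have hm : MeasurableSet {x : ℝ × ℝ | x.1 + x.2 = 1} :=
      measurableSet_eq_fun (by fun_prop) measurable_const
    rw [Measure.volume_eq_prod, Measure.measure_prod_null hm]
    filter_upwards with x
    have : (Prod.mk x ⁻¹' {x : ℝ × ℝ | x.1 + x.2 = 1}) = {1 - x} := by
      ext y; simp; constructor <;> intro h <;> linarith
    simp [this]
  have hsub : stdTriangle \ openTri ⊆
      {x : ℝ × ℝ | x.1 = 0} ∪ {x : ℝ × ℝ | x.2 = 0} ∪ {x : ℝ × ℝ | x.1 + x.2 = 1} := by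
    rintro ⟨x, y⟩ ⟨⟨hx, hy, hxy⟩, hno⟩
    simp only [openTri, Set.mem_setOf_eq, not_and_or, not_lt] at hno
    simp only [Set.mem_union, Set.mem_setOf_eq]
    rcases hno with h | h | h
    · exact Or.inl (Or.inl (le_antisymm h hx))
    · exact Or.inl (Or.inr (le_antisymm h hy))
    · exact Or.inr (le_antisymm hxy h)
  have hnull : volume (stdTriangle \ openTri) = 0 :=
    measure_mono_null hsub (by
      refine measure_union_null (measure_union_null h1 h2) h3)
  have hnull2 : volume (openTri \ stdTriangle) = 0 := by
    have hss : openTri ⊆ stdTriangle := fun x hx => ⟨hx.1.le, hx.2.1.le, hx.2.2.le⟩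
    simp [Set.diff_eq_empty.mpr hss]
  exact (MeasureTheory.ae_eq_set.mpr ⟨hnull, hnull2⟩)

lemma dirichletTri {p q r : ℝ} (hp : -1 < p) (hq : -1 < q) (hr : -1 < r) :
    ∫ x in stdTriangle, x.1 ^ p * x.2 ^ q * (1 - x.1 - x.2) ^ r
      = Real.Gamma (p+1) * Real.Gamma (q+1) * Real.Gamma (r+1) / Real.Gamma (p+q+r+3) := by
  have hsq : MeasurableSet (Set.Ioo (0:ℝ) 1 ×ˢ Set.Ioo (0:ℝ) 1) :=
    (measurableSet_Ioo).prod measurableSet_Ioo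
  set φ : ℝ × ℝ → ℝ × ℝ := fun z => (z.1, (1 - z.1) * z.2) with hφ
  set B : ℝ × ℝ → (ℝ × ℝ) →L[ℝ] (ℝ × ℝ) := fun z =>
    LinearMap.toContinuousLinearMap (Matrix.toLin (Module.Basis.finTwoProd ℝ) (Module.Basis.finTwoProd ℝ)
      !![1, 0; -z.2, 1 - z.1]) with hB
  have hFD : ∀ z : ℝ × ℝ, HasFDerivAt φ (B z) z := by
    intro z
    rw [hB]
    simp only
    rw [Matrix.toLin_finTwoProd_toContinuousLinearMap]
    convert HasFDerivAt.prodMk (𝕜 := ℝ) (hasFDerivAt_fst)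
      (((hasFDerivAt_const (1:ℝ) z).sub hasFDerivAt_fst).mul hasFDerivAt_snd) using 1 <;>
    · ext w <;> simp [φ] <;> ring
  have hBdet : ∀ z : ℝ × ℝ, (B z).det = 1 - z.1 := by
    intro z
    simp only [hB, LinearMap.det_toContinuousLinearMap, LinearMap.det_toLin,
      Matrix.det_fin_two_of]
    ring
  have hinj : Set.InjOn φ (Set.Ioo (0:ℝ) 1 ×ˢ Set.Ioo (0:ℝ) 1) := by
    rintro ⟨u, v⟩ ⟨hu, _⟩ ⟨u', v'⟩ _ heq
    simp only [φ, Prod.mk.injEq] at heq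
    obtain ⟨rfl, h2⟩ := heq
    have hne : (1 : ℝ) - u ≠ 0 := by simp only [Set.mem_Ioo] at hu; intro hc; linarith [hu.2]
    exact congrArg (Prod.mk u) (mul_left_cancel₀ hne h2)
  have himg : φ '' (Set.Ioo (0:ℝ) 1 ×ˢ Set.Ioo (0:ℝ) 1) = openTri := by
    ext ⟨x, y⟩
    constructor
    · rintro ⟨⟨u, v⟩, ⟨⟨hu0, hu1⟩, hv0, hv1⟩, heq⟩
      simp only [φ, Prod.mk.injEq] at heq
      obtain ⟨rfl, rfl⟩ := heq
      refine ⟨hu0, mul_pos (by linarith) hv0, ?_⟩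
      simp only
      nlinarith
    · rintro ⟨hx, hy, hxy⟩
      have h1x : (0:ℝ) < 1 - x := by simp only at hx hy hxy ⊢; linarith
      refine ⟨(x, y / (1 - x)), ⟨⟨hx, by linarith⟩, div_pos hy h1x,
        (div_lt_one h1x).2 (by simp only at hxy; linarith)⟩, ?_⟩
      have hc : (1 - x) * (y / (1 - x)) = y := by field_simp
      simp [φ, hc]
  calc ∫ x in stdTriangle, x.1 ^ p * x.2 ^ q * (1 - x.1 - x.2) ^ r
      = ∫ x in openTri, x.1 ^ p * x.2 ^ q * (1 - x.1 - x.2) ^ r :=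
        setIntegral_congr_set openTri_ae
    _ = ∫ z in Set.Ioo (0:ℝ) 1 ×ˢ Set.Ioo (0:ℝ) 1,
          |(B z).det| • ((φ z).1 ^ p * (φ z).2 ^ q * (1 - (φ z).1 - (φ z).2) ^ r) := by
        rw [← himg]
        exact integral_image_eq_integral_abs_det_fderiv_smul volume hsq
          (fun z _ => (hFD z).hasFDerivWithinAt) hinj _
    _ = ∫ z in Set.Ioo (0:ℝ) 1 ×ˢ Set.Ioo (0:ℝ) 1,
          (z.1 ^ p * (1 - z.1) ^ (q + r + 1)) * (z.2 ^ q * (1 - z.2) ^ r) := by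
        apply setIntegral_congr_fun hsq
        rintro ⟨u, v⟩ ⟨⟨hu0, hu1⟩, hv0, hv1⟩
        have h1u : (0:ℝ) < 1 - u := by linarith
        have h1v : (0:ℝ) < 1 - v := by linarith
        simp only [hBdet, φ, smul_eq_mul]
        rw [abs_of_pos h1u]
        have e1 : (1 : ℝ) - u - (1 - u) * v = (1 - u) * (1 - v) := by ring
        rw [e1, Real.mul_rpow h1u.le hv0.le, Real.mul_rpow h1u.le h1v.le]
        rw [show q + r + 1 = q + (r + 1) by ring, Real.rpow_add h1u,
          Real.rpow_add h1u, Real.rpow_one]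
        ring
    _ = (∫ u in Set.Ioo (0:ℝ) 1, u ^ p * (1 - u) ^ (q + r + 1))
          * ∫ v in Set.Ioo (0:ℝ) 1, v ^ q * (1 - v) ^ r := by
        rw [Measure.volume_eq_prod]
        exact setIntegral_prod_mul (fun u => u ^ p * (1 - u) ^ (q + r + 1))
          (fun v => v ^ q * (1 - v) ^ r) _ _
    _ = Real.Gamma (p+1) * Real.Gamma (q+1) * Real.Gamma (r+1) / Real.Gamma (p+q+r+3) := by
        rw [betaR hp (by linarith), betaR hq hr]
        have h1 : p + (q + r + 1) + 2 = p + q + r + 3 := by ring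
        rw [h1]
        have hg : Real.Gamma (q + r + 2) ≠ 0 :=
          (Real.Gamma_pos_of_pos (by linarith)).ne'
        have hg2 : Real.Gamma (p + q + r + 3) ≠ 0 :=
          (Real.Gamma_pos_of_pos (by linarith)).ne'
        rw [show q + r + 1 + 1 = q + r + 2 by ring]
        field_simp

lemma poch_succ (a : ℝ) (k : ℕ) : poch a (k + 1) = poch a k * (a + k) := by
  simp [poch, ascPochhammer_succ_right]

lemma poch_pos {a : ℝ} (ha : 0 < a) (n : ℕ) : 0 < poch a n := by
  induction n with
  | zero => simp [poch]
  | succ k ih =>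
      rw [poch_succ]
      have : (0:ℝ) < a + k := by positivity
      exact mul_pos ih this

lemma Gamma_poch {a : ℝ} (ha : 0 < a) (n : ℕ) :
    Real.Gamma (a + n) = poch a n * Real.Gamma a := by
  induction n with
  | zero => simp [poch]
  | succ k ih =>
      have h1 : a + ((k:ℝ) + 1) = (a + k) + 1 := by ring
      push_cast
      rw [h1, Real.Gamma_add_one (by positivity), ih, poch_succ]
      ring

lemma rpow_mul_pow {x a : ℝ} (hx : 0 ≤ x) (ha : -1 < a) (k : ℕ) :
    x ^ a * x ^ k = x ^ (a + k) := by
  rcases hx.eq_or_lt with rfl | hx'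
  · rcases Nat.eq_zero_or_pos k with rfl | hk
    · simp
    · have h1 : (1:ℝ) ≤ k := by exact_mod_cast hk
      have h2 : (0:ℝ) < a + k := by linarith
      rw [zero_pow hk.ne', mul_zero, Real.zero_rpow h2.ne']
  · rw [← Real.rpow_natCast x k, ← Real.rpow_add hx']

/-- The inner product ⟨B^m_h, B^m_l⟩_α of two Bernstein polynomials equals
    C(m,h) C(m,l) (α1+1)_{h1+l1} (α2+1)_{h2+l2} (α3+1)_{h3+l3} / (|α|+3)_{2m}. -/
theorem bernstein_inner_product (α₁ α₂ α₃ : ℝ)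
    (h₁ : -1 < α₁) (h₂ : -1 < α₂) (h₃ : -1 < α₃)
    (m : ℕ) (h l : ℕ × ℕ) (hh : h ∈ Theta m) (hl : l ∈ Theta m) :
    ∫ x in stdTriangle, walpha α₁ α₂ α₃ x * bern m h x * bern m l x =
      trinom m h * trinom m l *
        (poch (α₁ + 1) (h.1 + l.1) * poch (α₂ + 1) (h.2 + l.2) *
          poch (α₃ + 1) ((m - h.1 - h.2) + (m - l.1 - l.2))) /
        poch (α₁ + α₂ + α₃ + 3) (2 * m) := by
  have hh' : h.1 + h.2 ≤ m := (Finset.mem_filter.mp hh).2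
  have hl' : l.1 + l.2 ≤ m := (Finset.mem_filter.mp hl).2
  set k1 : ℕ := h.1 + l.1 with hk1
  set k2 : ℕ := h.2 + l.2 with hk2
  set k3 : ℕ := (m - h.1 - h.2) + (m - l.1 - l.2) with hk3
  have hsum : k1 + k2 + k3 = 2 * m := by omega
  have hTm : MeasurableSet stdTriangle := by
    rw [show stdTriangle = {x : ℝ × ℝ | 0 ≤ x.1} ∩ {x : ℝ × ℝ | 0 ≤ x.2}
        ∩ {x : ℝ × ℝ | x.1 + x.2 ≤ 1} from by ext x; simp [stdTriangle, and_assoc]]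
    exact ((measurableSet_le measurable_const measurable_fst).inter
      (measurableSet_le measurable_const measurable_snd)).inter
      (measurableSet_le (measurable_fst.add measurable_snd) measurable_const)
  set C : ℝ := Aconst α₁ α₂ α₃ * trinom m h * trinom m l with hC
  have hstep : ∫ x in stdTriangle, walpha α₁ α₂ α₃ x * bern m h x * bern m l x
      = ∫ x in stdTriangle, C * (x.1 ^ (α₁ + (k1:ℝ)) *
          x.2 ^ (α₂ + (k2:ℝ)) * (1 - x.1 - x.2) ^ (α₃ + (k3:ℝ))) := by
    apply setIntegral_congr_fun hTm
    intro x hx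
    obtain ⟨hx1, hx2, hx3⟩ := hx
    have hz : (0:ℝ) ≤ 1 - x.1 - x.2 := by linarith
    have c1 : (0:ℝ) ≤ (h.1 : ℝ) := Nat.cast_nonneg _
    have c2 : (0:ℝ) ≤ (h.2 : ℝ) := Nat.cast_nonneg _
    have c3 : (0:ℝ) ≤ ((m - h.1 - h.2 : ℕ) : ℝ) := Nat.cast_nonneg _
    have e1 : x.1 ^ α₁ * x.1 ^ h.1 * x.1 ^ l.1 = x.1 ^ (α₁ + (k1:ℝ)) := by
      rw [show α₁ + (k1:ℝ) = (α₁ + h.1) + l.1 by rw [hk1]; push_cast; ring,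
        ← rpow_mul_pow (a := α₁ + h.1) hx1 (by linarith) l.1,
        ← rpow_mul_pow hx1 h₁ h.1]
    have e2 : x.2 ^ α₂ * x.2 ^ h.2 * x.2 ^ l.2 = x.2 ^ (α₂ + (k2:ℝ)) := by
      rw [show α₂ + (k2:ℝ) = (α₂ + h.2) + l.2 by rw [hk2]; push_cast; ring,
        ← rpow_mul_pow (a := α₂ + h.2) hx2 (by linarith) l.2,
        ← rpow_mul_pow hx2 h₂ h.2]
    have e3 : (1 - x.1 - x.2) ^ α₃ * (1 - x.1 - x.2) ^ (m - h.1 - h.2)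
        * (1 - x.1 - x.2) ^ (m - l.1 - l.2) = (1 - x.1 - x.2) ^ (α₃ + (k3:ℝ)) := by
      rw [show α₃ + (k3:ℝ) = (α₃ + (m - h.1 - h.2 : ℕ)) + (m - l.1 - l.2 : ℕ) by
          rw [hk3]; push_cast; ring,
        ← rpow_mul_pow (a := α₃ + (m - h.1 - h.2 : ℕ)) hz (by linarith) (m - l.1 - l.2),
        ← rpow_mul_pow hz h₃ (m - h.1 - h.2)]
    have expand : walpha α₁ α₂ α₃ x * bern m h x * bern m l x
        = C * ((x.1 ^ α₁ * x.1 ^ h.1 * x.1 ^ l.1) *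
            ((x.2 ^ α₂ * x.2 ^ h.2 * x.2 ^ l.2) *
              ((1 - x.1 - x.2) ^ α₃ * (1 - x.1 - x.2) ^ (m - h.1 - h.2)
                * (1 - x.1 - x.2) ^ (m - l.1 - l.2)))) := by
      simp only [walpha, bern, hC]
      ring
    show walpha α₁ α₂ α₃ x * bern m h x * bern m l x = _
    rw [expand, e1, e2, e3]
    ring
  rw [hstep, integral_const_mul,
    dirichletTri (by have : (0:ℝ) ≤ (k1:ℝ) := Nat.cast_nonneg _; linarith)
      (by have : (0:ℝ) ≤ (k2:ℝ) := Nat.cast_nonneg _; linarith)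
      (by have : (0:ℝ) ≤ (k3:ℝ) := Nat.cast_nonneg _; linarith)]
  have g1 : Real.Gamma (α₁ + (k1:ℝ) + 1) = poch (α₁ + 1) k1 * Real.Gamma (α₁ + 1) := by
    rw [show α₁ + (k1:ℝ) + 1 = (α₁ + 1) + k1 by ring, Gamma_poch (by linarith)]
  have g2 : Real.Gamma (α₂ + (k2:ℝ) + 1) = poch (α₂ + 1) k2 * Real.Gamma (α₂ + 1) := by
    rw [show α₂ + (k2:ℝ) + 1 = (α₂ + 1) + k2 by ring, Gamma_poch (by linarith)]
  have g3 : Real.Gamma (α₃ + (k3:ℝ) + 1) = poch (α₃ + 1) k3 * Real.Gamma (α₃ + 1) := by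
    rw [show α₃ + (k3:ℝ) + 1 = (α₃ + 1) + k3 by ring, Gamma_poch (by linarith)]
  have gS : Real.Gamma (α₁ + (k1:ℝ) + (α₂ + (k2:ℝ)) + (α₃ + (k3:ℝ)) + 3)
      = poch (α₁ + α₂ + α₃ + 3) (2 * m) * Real.Gamma (α₁ + α₂ + α₃ + 3) := by
    have hc : ((k1:ℝ) + k2 + k3) = ((2 * m : ℕ) : ℝ) := by exact_mod_cast hsum
    rw [show α₁ + (k1:ℝ) + (α₂ + (k2:ℝ)) + (α₃ + (k3:ℝ)) + 3
        = (α₁ + α₂ + α₃ + 3) + ((k1:ℝ) + k2 + k3) by ring, hc,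
      Gamma_poch (by linarith)]
  rw [g1, g2, g3, gS]
  have p1 : (0:ℝ) < Real.Gamma (α₁ + 1) := Real.Gamma_pos_of_pos (by linarith)
  have p2 : (0:ℝ) < Real.Gamma (α₂ + 1) := Real.Gamma_pos_of_pos (by linarith)
  have p3 : (0:ℝ) < Real.Gamma (α₃ + 1) := Real.Gamma_pos_of_pos (by linarith)
  have pS : (0:ℝ) < Real.Gamma (α₁ + α₂ + α₃ + 3) := Real.Gamma_pos_of_pos (by linarith)
  have pP : (0:ℝ) < poch (α₁ + α₂ + α₃ + 3) (2 * m) := poch_pos (by linarith) _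
  rw [hC, Aconst]
  field_simp
end

section
/- Recurrence-based evaluation of weighted integrals of Chebyshev expansions: let α, β > -1, r := β - α, u := α + β + 1, and let S(x) = (1/2)γ_0 + ∑_{i=1}^{M} γ_i T_i(2x-1) be a polynomial expressed in shifted Chebyshev polynomials of the first kind. Define d_{M+1} = d_M := 0 and d_{i-1} := (2r d_i + (i-u) d_{i+1} - γ_i)/(i+u) for i = M, M-1, ..., 1. Then ∫_0^1 (1-x)^α x^β S(x) dx = B(α+1, β+1) · ((1/2)γ_0 - r d_0 + u d_1), where B denotes the Beta function Γ(α+1)Γ(β+1)/Γ(α+β+2). -/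
open Real Finset intervalIntegral

open Polynomial Polynomial.Chebyshev MeasureTheory Set

lemma w_integrable {α β : ℝ} (hα : -1 < α) (hβ : -1 < β) (p : ℝ[X]) :
    IntervalIntegrable (fun x => (1 - x) ^ α * x ^ β * p.eval x) volume 0 1 := by
  have h1 : IntervalIntegrable (fun x => (1 - x) ^ α * x ^ β * p.eval x) volume 0 (1/2) := by
    have hfg : (fun x : ℝ => (1 - x) ^ α * x ^ β * p.eval x)
        = fun x : ℝ => x ^ β * ((1 - x) ^ α * p.eval x) := by funext x; ring
    rw [hfg]
    apply (intervalIntegrable_rpow' hβ).mul_continuousOn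
    apply ContinuousOn.mul _ (p.continuous_aeval.continuousOn)
    apply ContinuousOn.rpow_const (by fun_prop)
    intro x hx
    rw [Set.uIcc_of_le (by norm_num : (0:ℝ) ≤ 1/2)] at hx
    left
    have := hx.2
    norm_num at this ⊢
    linarith
  have h2 : IntervalIntegrable (fun x => (1 - x) ^ α * x ^ β * p.eval x) volume (1/2) 1 := by
    have hfg : (fun x : ℝ => (1 - x) ^ α * x ^ β * p.eval x)
        = fun x : ℝ => (1 - x) ^ α * (x ^ β * p.eval x) := by funext x; ring
    rw [hfg]
    have hint : IntervalIntegrable (fun x : ℝ => (1 - x) ^ α) volume (1/2) 1 := by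
      have := (intervalIntegrable_rpow' (r := α) hα (a := 0) (b := 1/2)).comp_sub_left 1
      norm_num at this
      exact this.symm
    apply hint.mul_continuousOn
    apply ContinuousOn.mul _ (p.continuous_aeval.continuousOn)
    apply ContinuousOn.rpow_const (by fun_prop)
    intro x hx
    rw [Set.uIcc_of_le (by norm_num : (1:ℝ)/2 ≤ 1)] at hx
    left
    have := hx.1
    positivity
  exact h1.trans h2

lemma w_integral {α β : ℝ} (hα : -1 < α) (hβ : -1 < β) :
    ∫ x in (0:ℝ)..1, (1 - x) ^ α * x ^ β =
      Real.Gamma (α + 1) * Real.Gamma (β + 1) / Real.Gamma (α + β + 2) := by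
  have hs : 0 < ((β : ℂ) + 1).re := by simp; linarith
  have ht : 0 < ((α : ℂ) + 1).re := by simp; linarith
  have key := Complex.Gamma_mul_Gamma_eq_betaIntegral hs ht
  have hbeta : Complex.betaIntegral ((β : ℂ) + 1) ((α : ℂ) + 1)
      = ((∫ x in (0:ℝ)..1, (1 - x) ^ α * x ^ β : ℝ) : ℂ) := by
    rw [Complex.betaIntegral, ← intervalIntegral.integral_ofReal]
    apply intervalIntegral.integral_congr
    intro x hx
    rw [Set.uIcc_of_le (by norm_num : (0:ℝ) ≤ 1)] at hx
    simp only [add_sub_cancel_right]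
    rw [Complex.ofReal_mul, Complex.ofReal_cpow (by linarith [hx.2] : (0:ℝ) ≤ 1 - x),
      Complex.ofReal_cpow hx.1]
    push_cast
    ring
  rw [hbeta] at key
  have h2 : ((β : ℂ) + 1) + ((α : ℂ) + 1) = ((α + β + 2 : ℝ) : ℂ) := by push_cast; ring
  rw [h2] at key
  rw [show ((β : ℂ) + 1) = ((β + 1 : ℝ) : ℂ) by push_cast; ring,
    show ((α : ℂ) + 1) = ((α + 1 : ℝ) : ℂ) by push_cast; ring] at key
  rw [Complex.Gamma_ofReal, Complex.Gamma_ofReal, Complex.Gamma_ofReal] at key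
  have hpos : 0 < Real.Gamma (α + β + 2) := Real.Gamma_pos_of_pos (by linarith)
  rw [← Complex.ofReal_mul, ← Complex.ofReal_mul, Complex.ofReal_inj] at key
  field_simp
  linarith [key]

lemma ibp {α β : ℝ} (hα : -1 < α) (hβ : -1 < β) (p : ℝ[X]) :
    ∫ x in (0:ℝ)..1, (1 - x) ^ α * x ^ β *
      ((β + 1) * (1 - x) * p.eval x - (α + 1) * x * p.eval x
        + (1 - x) * x * p.derivative.eval x) = 0 := by
  set q : ℝ[X] := C (β + 1) * (1 - X) * p - C (α + 1) * X * p + (1 - X) * X * p.derivative with hqdef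
  have hq : ∀ x : ℝ, q.eval x = (β + 1) * (1 - x) * p.eval x - (α + 1) * x * p.eval x
      + (1 - x) * x * p.derivative.eval x := by
    intro x; simp [hqdef]; try ring
  have hint := w_integrable hα hβ q
  have hcont : ContinuousOn (fun x : ℝ => (1 - x) ^ (α + 1) * x ^ (β + 1) * p.eval x)
      (Icc (0:ℝ) 1) := by
    apply ContinuousOn.mul _ p.continuous_aeval.continuousOn
    apply ContinuousOn.mul
    · exact ContinuousOn.rpow_const (by fun_prop) (fun x _ => Or.inr (by linarith))
    · exact ContinuousOn.rpow_const (by fun_prop) (fun x _ => Or.inr (by linarith))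
  have hderiv : ∀ x ∈ Ioo (0:ℝ) 1,
      HasDerivAt (fun x : ℝ => (1 - x) ^ (α + 1) * x ^ (β + 1) * p.eval x)
        ((1 - x) ^ α * x ^ β * q.eval x) x := by
    intro x hx
    have hx0 : 0 < x := hx.1
    have hx1 : 0 < 1 - x := by linarith [hx.2]
    have h1 : HasDerivAt (fun x : ℝ => (1 - x) ^ (α + 1)) (-((α + 1) * (1 - x) ^ α)) x := by
      have hbase : HasDerivAt (fun x : ℝ => 1 - x) (-1) x := (hasDerivAt_id x).const_sub 1
      have := (Real.hasDerivAt_rpow_const (x := 1 - x) (p := α + 1)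
        (Or.inl hx1.ne')).comp x hbase
      refine this.congr_deriv ?_
      rw [show α + 1 - 1 = α by ring]
      ring
    have h2 : HasDerivAt (fun x : ℝ => x ^ (β + 1)) ((β + 1) * x ^ β) x := by
      have := Real.hasDerivAt_rpow_const (x := x) (p := β + 1) (Or.inl hx0.ne')
      convert this using 2
      rw [show β + 1 - 1 = β by ring]
    have h3 : HasDerivAt (fun x : ℝ => p.eval x) (p.derivative.eval x) x := p.hasDerivAt x
    have := (h1.mul h2).mul h3
    refine this.congr_deriv ?_
    simp only [Pi.mul_apply]
    rw [hq x]
    rw [show (1 - x) ^ (α + 1) = (1 - x) ^ α * (1 - x) by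
      rw [Real.rpow_add hx1, Real.rpow_one]]
    rw [show x ^ (β + 1) = x ^ β * x by rw [Real.rpow_add hx0, Real.rpow_one]]
    ring
  have heq := intervalIntegral.integral_eq_sub_of_hasDerivAt_of_le (by norm_num) hcont hderiv hint
  rw [show (1 - (1:ℝ)) ^ (α + 1) = 0 by
      rw [sub_self, Real.zero_rpow (by linarith)],
    show (0:ℝ) ^ (β + 1) = 0 by rw [Real.zero_rpow (by linarith)]] at heq
  simp only [zero_mul, mul_zero, sub_zero, zero_sub, sub_self] at heq
  rw [intervalIntegral.integral_congr (g := fun x : ℝ => (1 - x) ^ α * x ^ β * q.eval x)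
    (fun x _ => by show _ = (1 - x) ^ α * x ^ β * eval x q; rw [hq x])]
  simpa using heq

noncomputable def Iz (α β : ℝ) (n : ℤ) : ℝ :=
  ∫ x in (0:ℝ)..1, (1 - x) ^ α * x ^ β * (Polynomial.Chebyshev.T ℝ n).eval (2 * x - 1)

lemma wE_integrable {α β : ℝ} (hα : -1 < α) (hβ : -1 < β) (m : ℤ) :
    IntervalIntegrable
      (fun x => (1 - x) ^ α * x ^ β * (Polynomial.Chebyshev.T ℝ m).eval (2 * x - 1))
      volume 0 1 := by
  have := w_integrable hα hβ ((Polynomial.Chebyshev.T ℝ m).comp (2 * X - 1))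
  simpa [eval_comp] using this

lemma keyZ {α β : ℝ} (hα : -1 < α) (hβ : -1 < β) (n : ℤ) :
    ((n : ℝ) + (α + β + 1) + 1) * Iz α β (n + 1)
      = 2 * (β - α) * Iz α β n + ((n : ℝ) - (α + β + 1) - 1) * Iz α β (n - 1) := by
  set p : ℝ[X] := (Polynomial.Chebyshev.T ℝ n).comp (2 * X - 1) with hpdef
  have hpe : ∀ x : ℝ, p.eval x = (Polynomial.Chebyshev.T ℝ n).eval (2 * x - 1) := by
    intro x; simp [hpdef, eval_comp]
  have hpd : ∀ x : ℝ, p.derivative.eval x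
      = 2 * (derivative (Polynomial.Chebyshev.T ℝ n)).eval (2 * x - 1) := by
    intro x; simp [hpdef, derivative_comp, eval_comp]; try ring
  have h0 := ibp hα hβ p
  -- pointwise identity
  have hpt : ∀ x : ℝ,
      (β + 1) * (1 - x) * p.eval x - (α + 1) * x * p.eval x
        + (1 - x) * x * p.derivative.eval x
      = ((β - α) / 2) * (Polynomial.Chebyshev.T ℝ n).eval (2 * x - 1)
        - (((n : ℝ) + (α + β + 1) + 1) / 4) * (Polynomial.Chebyshev.T ℝ (n + 1)).eval (2 * x - 1)
        + (((n : ℝ) - (α + β + 1) - 1) / 4)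
            * (Polynomial.Chebyshev.T ℝ (n - 1)).eval (2 * x - 1) := by
    intro x
    rw [hpe, hpd]
    have e1 : (1 - (2 * x - 1) ^ 2) * (derivative (Polynomial.Chebyshev.T ℝ n)).eval (2 * x - 1)
        = (n : ℝ) * ((Polynomial.Chebyshev.T ℝ (n - 1)).eval (2 * x - 1)
            - (2 * x - 1) * (Polynomial.Chebyshev.T ℝ n).eval (2 * x - 1)) := by
      have h := Polynomial.Chebyshev.one_sub_X_sq_mul_derivative_T_eq_poly_in_T (R := ℝ) (n - 1)
      rw [show n - 1 + 1 = n by ring] at h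
      have := congrArg (eval (2 * x - 1)) h
      simpa using this
    have e2 : (Polynomial.Chebyshev.T ℝ (n + 1)).eval (2 * x - 1)
        = 2 * (2 * x - 1) * (Polynomial.Chebyshev.T ℝ n).eval (2 * x - 1)
            - (Polynomial.Chebyshev.T ℝ (n - 1)).eval (2 * x - 1) := by
      have h := Polynomial.Chebyshev.T_add_two ℝ (n - 1)
      rw [show n - 1 + 2 = n + 1 by ring, show n - 1 + 1 = n by ring] at h
      have := congrArg (eval (2 * x - 1)) h
      simpa using this
    linear_combination (1 / 2) * e1 + (((n : ℝ) + (α + β + 1) + 1) / 4) * e2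
  have i1 := wE_integrable hα hβ n
  have i2 := wE_integrable hα hβ (n + 1)
  have i3 := wE_integrable hα hβ (n - 1)
  have hsplit : (∫ x in (0:ℝ)..1, (1 - x) ^ α * x ^ β *
      ((β + 1) * (1 - x) * p.eval x - (α + 1) * x * p.eval x
        + (1 - x) * x * p.derivative.eval x))
      = ((β - α) / 2) * Iz α β n
        + (-(((n : ℝ) + (α + β + 1) + 1) / 4)) * Iz α β (n + 1)
        + (((n : ℝ) - (α + β + 1) - 1) / 4) * Iz α β (n - 1) := by
    rw [intervalIntegral.integral_congr (g := fun x : ℝ =>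
      ((β - α) / 2) * ((1 - x) ^ α * x ^ β
          * (Polynomial.Chebyshev.T ℝ n).eval (2 * x - 1))
      + (-(((n : ℝ) + (α + β + 1) + 1) / 4)) * ((1 - x) ^ α * x ^ β
          * (Polynomial.Chebyshev.T ℝ (n + 1)).eval (2 * x - 1))
      + (((n : ℝ) - (α + β + 1) - 1) / 4) * ((1 - x) ^ α * x ^ β
          * (Polynomial.Chebyshev.T ℝ (n - 1)).eval (2 * x - 1)))
      (fun x _ => by beta_reduce; rw [hpt x]; ring)]
    rw [intervalIntegral.integral_add ((i1.const_mul _).add (i2.const_mul _)) (i3.const_mul _),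
        intervalIntegral.integral_add (i1.const_mul _) (i2.const_mul _),
        intervalIntegral.integral_const_mul, intervalIntegral.integral_const_mul,
        intervalIntegral.integral_const_mul]
    simp only [Iz]
  rw [hsplit] at h0
  linear_combination (-4) * h0

noncomputable def Gfun (α β : ℝ) (d : ℕ → ℝ) (k : ℕ) : ℝ :=
  -(((k : ℝ) + 1) + (α + β + 1)) * Iz α β ((k : ℤ) + 1) * d k
    + ((α + β + 1) - (k : ℝ)) * Iz α β (k : ℤ) * d (k + 1)

lemma step_lemma {α β : ℝ} (hα : -1 < α) (hβ : -1 < β) {M : ℕ} {γ d : ℕ → ℝ}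
    (hd : ∀ i : ℕ, 1 ≤ i → i ≤ M →
      d (i - 1) = (2 * (β - α) * d i + ((i : ℝ) - (α + β + 1)) * d (i + 1) - γ i) /
        ((i : ℝ) + (α + β + 1)))
    (k : ℕ) (hk : k + 1 ≤ M) :
    γ (k + 1) * Iz α β (((k + 1 : ℕ) : ℤ)) + Gfun α β d (k + 1) = Gfun α β d k := by
  have hne : ((k : ℝ) + 1) + (α + β + 1) ≠ 0 := by
    have : (0:ℝ) ≤ (k : ℝ) := Nat.cast_nonneg k
    intro h; nlinarith
  have hγ := hd (k + 1) (by omega) hk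
  simp only [Nat.add_sub_cancel] at hγ
  push_cast at hγ
  rw [eq_div_iff hne] at hγ
  have hkey := keyZ hα hβ ((k : ℤ) + 1)
  rw [show ((k : ℤ) + 1 + 1) = ((k : ℤ) + 2) by ring,
      show ((k : ℤ) + 1 - 1) = (k : ℤ) by ring] at hkey
  push_cast at hkey
  simp only [Gfun]
  push_cast
  rw [show ((k : ℤ) + 1 + 1) = (k : ℤ) + 2 by ring]
  linear_combination Iz α β ((k : ℤ) + 1) * hγ - d (k + 1) * hkey

lemma sum_lemma {α β : ℝ} (hα : -1 < α) (hβ : -1 < β) {M : ℕ} {γ d : ℕ → ℝ}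
    (hdM : d M = 0) (hdM1 : d (M + 1) = 0)
    (hd : ∀ i : ℕ, 1 ≤ i → i ≤ M →
      d (i - 1) = (2 * (β - α) * d i + ((i : ℝ) - (α + β + 1)) * d (i + 1) - γ i) /
        ((i : ℝ) + (α + β + 1))) :
    ∀ n : ℕ, n ≤ M →
      ∑ i ∈ Finset.Icc (M + 1 - n) M, γ i * Iz α β (i : ℤ) = Gfun α β d (M - n) := by
  intro n
  induction n with
  | zero =>
    intro _
    rw [Nat.sub_zero, Finset.Icc_eq_empty (by omega), Finset.sum_empty]
    simp [Gfun, hdM, hdM1]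
  | succ n ih =>
    intro hn1
    have hn : n ≤ M := by omega
    obtain ⟨k, hk⟩ : ∃ k, M - n = k + 1 := ⟨M - n - 1, by omega⟩
    have h1 : M + 1 - (n + 1) = k + 1 := by omega
    have h2 : M + 1 - n = k + 2 := by omega
    have ih' := ih hn
    rw [h2, hk] at ih'
    rw [h1, show M - (n + 1) = k by omega]
    have hIcc : Finset.Icc (k + 1) M = insert (k + 1) (Finset.Icc (k + 2) M) := by
      ext a; simp; omega
    rw [hIcc, Finset.sum_insert (by simp), ih']
    exact step_lemma hα hβ hd k (by omega)

/-- Evaluation of the integral ∫₀¹ (1-x)^α x^β S(x) dx of a polynomial S given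
    by its shifted Chebyshev expansion, via a backward recurrence. -/
theorem chebyshev_jacobi_integral (α β : ℝ) (hα : -1 < α) (hβ : -1 < β)
    (M : ℕ) (γ : ℕ → ℝ) (d : ℕ → ℝ)
    (hdM : d M = 0) (hdM1 : d (M + 1) = 0)
    (hd : ∀ i : ℕ, 1 ≤ i → i ≤ M →
      d (i - 1) = (2 * (β - α) * d i + ((i : ℝ) - (α + β + 1)) * d (i + 1) - γ i) /
        ((i : ℝ) + (α + β + 1))) :
    ∫ x in (0:ℝ)..1, (1 - x) ^ α * x ^ β *
        (γ 0 / 2 + ∑ i ∈ Finset.Icc 1 M,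
          γ i * (Polynomial.Chebyshev.T ℝ (i : ℤ)).eval (2 * x - 1)) =
      (Real.Gamma (α + 1) * Real.Gamma (β + 1) / Real.Gamma (α + β + 2)) *
        (γ 0 / 2 - (β - α) * d 0 + (α + β + 1) * d 1) := by
  -- value of Iz 0
  have hIz0 : Iz α β 0 = Real.Gamma (α + 1) * Real.Gamma (β + 1) / Real.Gamma (α + β + 2) := by
    rw [← w_integral hα hβ]
    unfold Iz
    apply intervalIntegral.integral_congr
    intro x _
    simp [Polynomial.Chebyshev.T_zero]
  -- key0
  have hIzneg : Iz α β (-1) = Iz α β 1 := by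
    unfold Iz
    rw [show ((-1 : ℤ)) = -(1 : ℤ) from rfl, Polynomial.Chebyshev.T_neg]
  have key0 : (α + β + 1 + 1) * Iz α β 1 = (β - α) * Iz α β 0 := by
    have h := keyZ hα hβ 0
    rw [show ((0 : ℤ) - 1) = -1 by ring, show ((0 : ℤ) + 1) = 1 by ring, hIzneg] at h
    push_cast at h
    linarith
  -- split the integral
  have hL : (∫ x in (0:ℝ)..1, (1 - x) ^ α * x ^ β *
        (γ 0 / 2 + ∑ i ∈ Finset.Icc 1 M,
          γ i * (Polynomial.Chebyshev.T ℝ (i : ℤ)).eval (2 * x - 1)))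
      = γ 0 / 2 * Iz α β 0 + ∑ i ∈ Finset.Icc 1 M, γ i * Iz α β (i : ℤ) := by
    rw [intervalIntegral.integral_congr (g := fun x : ℝ =>
        γ 0 / 2 * ((1 - x) ^ α * x ^ β
            * (Polynomial.Chebyshev.T ℝ 0).eval (2 * x - 1))
        + ∑ i ∈ Finset.Icc 1 M, γ i * ((1 - x) ^ α * x ^ β
            * (Polynomial.Chebyshev.T ℝ (i : ℤ)).eval (2 * x - 1)))
      (fun x _ => by
        beta_reduce
        rw [mul_add, Finset.mul_sum]
        congr 1
        · simp [Polynomial.Chebyshev.T_zero]; ring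
        · exact Finset.sum_congr rfl fun i _ => by ring)]
    have h2 : IntervalIntegrable (fun x : ℝ => ∑ i ∈ Finset.Icc 1 M,
        γ i * ((1 - x) ^ α * x ^ β
          * (Polynomial.Chebyshev.T ℝ (i : ℤ)).eval (2 * x - 1))) volume 0 1 := by
      have := IntervalIntegrable.sum (μ := volume) (a := (0:ℝ)) (b := 1) (Finset.Icc 1 M)
        (f := fun (i : ℕ) (x : ℝ) => γ i * ((1 - x) ^ α * x ^ β
          * (Polynomial.Chebyshev.T ℝ (i : ℤ)).eval (2 * x - 1)))
        (fun i _ => (wE_integrable hα hβ (i : ℤ)).const_mul _)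
      simpa [Finset.sum_fn] using this
    rw [intervalIntegral.integral_add ((wE_integrable hα hβ 0).const_mul _) h2,
      intervalIntegral.integral_finset_sum
        (fun (i : ℕ) (_ : i ∈ Finset.Icc 1 M) => (wE_integrable hα hβ (i : ℤ)).const_mul (γ i))]
    simp only [intervalIntegral.integral_const_mul]
    simp only [Iz]
  have hS := sum_lemma hα hβ hdM hdM1 hd M le_rfl
  rw [show M + 1 - M = 1 by omega, Nat.sub_self] at hS
  rw [hL, hS]
  simp only [Gfun]
  push_cast
  norm_num
  rw [hIz0] at key0 ⊢
  linear_combination (- d 0) * key0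
end
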